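/- Let c ∈ ℝ and let W : ℝ² → ℝ be a polynomial function with W(x,y) > 0 for all (x, y) ∈ ℝ². Then at each of the two points p = (0, 1/√2) and p = (0, −1/√2), the Jacobian matrix of the R5-class vector field has trace τ = −(1 + 4c) and satisfies τ² − 4Δ = −16·W(p)² < 0, where Δ is its determinant; hence each of these fixed points is a spiral, unstable when c < −1/4 (τ > 0) and stable when c > −1/4 (τ < 0), for every admissible choice of W. -/

import Mathlib

/-- For any `c` and any everywhere-positive polynomial `W`, at each of the points
`(0, ±1/√2)` the Jacobian of the R5-class vector field has trace `τ = −(1+4c)` and satisfies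
`τ² − 4Δ = −16·W(p)² < 0`: each point is a spiral, unstable when `c < −1/4` and stable when
`c > −1/4`. -/
theorem stmt19 (c : ℝ) (W : MvPolynomial (Fin 2) ℝ)
    (hW : ∀ x y : ℝ, 0 < MvPolynomial.eval ![x, y] W)
    (P Q : ℝ → ℝ → ℝ)
    (hP : ∀ x y : ℝ, P x y = x * (2*x^2 + 2*y^2 + 1) * ((x^2 + y^2)^2 + x^2 - y^2 - c)
      - y * (2*x^2 + 2*y^2 - 1) * MvPolynomial.eval ![x, y] W)
    (hQ : ∀ x y : ℝ, Q x y = y * (2*x^2 + 2*y^2 - 1) * ((x^2 + y^2)^2 + x^2 - y^2 - c)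
      + x * (2*x^2 + 2*y^2 + 1) * MvPolynomial.eval ![x, y] W) :
    ∀ s : ℝ, (s = 1 / Real.sqrt 2 ∨ s = -(1 / Real.sqrt 2)) →
      ∀ τ Δ : ℝ,
        τ = deriv (fun x : ℝ => P x s) 0 + deriv (fun y : ℝ => Q 0 y) s →
        Δ = deriv (fun x : ℝ => P x s) 0 * deriv (fun y : ℝ => Q 0 y) s
          - deriv (fun y : ℝ => P 0 y) s * deriv (fun x : ℝ => Q x s) 0 →
        τ = -(1 + 4*c) ∧
        τ^2 - 4*Δ = -16 * (MvPolynomial.eval ![(0 : ℝ), s] W)^2 ∧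
        τ^2 - 4*Δ < 0 ∧
        (c < -(1/4) → 0 < τ) ∧
        (-(1/4) < c → τ < 0) := by
  have haev : ∀ v : Fin 2 → ℝ, MvPolynomial.aeval v W = MvPolynomial.eval v W := fun v => by
    rw [← MvPolynomial.coe_aeval_eq_eval]; rfl
  intro s hs τ Δ hτ hΔ
  have hs2 : s ^ 2 = 1 / 2 := by
    have h1 : s ^ 2 = (1 / Real.sqrt 2) ^ 2 := by rcases hs with h | h <;> rw [h] <;> ring
    rw [h1, div_pow, one_pow, Real.sq_sqrt (by norm_num : (0:ℝ) ≤ 2)]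
  set w0 : ℝ := MvPolynomial.eval ![(0:ℝ), s] W with hw0def
  have hw0 : 0 < w0 := hW 0 s
  -- differentiability of W along the two lines
  have hfA : AnalyticAt ℝ (fun x : ℝ => MvPolynomial.eval ![x, s] W) 0 := by
    have h := AnalyticAt.aeval_mvPolynomial (𝕜 := ℝ) (f := fun x : ℝ => ![x, s]) (z := 0)
        (fun i => by fin_cases i <;> simp <;> [exact analyticAt_id; exact analyticAt_const]) W
    simpa only [haev] using h
  have hgA : AnalyticAt ℝ (fun y : ℝ => MvPolynomial.eval ![0, y] W) s := by
    have h := AnalyticAt.aeval_mvPolynomial (𝕜 := ℝ) (f := fun y : ℝ => ![(0:ℝ), y]) (z := s)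
        (fun i => by fin_cases i <;> simp <;> [exact analyticAt_const; exact analyticAt_id]) W
    simpa only [haev] using h
  set df : ℝ := deriv (fun x : ℝ => MvPolynomial.eval ![x, s] W) 0 with hdf
  set dg : ℝ := deriv (fun y : ℝ => MvPolynomial.eval ![0, y] W) s with hdg
  have hf0 : HasDerivAt (fun x : ℝ => MvPolynomial.eval ![x, s] W) df 0 :=
    hfA.differentiableAt.hasDerivAt
  have hg0 : HasDerivAt (fun y : ℝ => MvPolynomial.eval ![0, y] W) dg s :=
    hgA.differentiableAt.hasDerivAt
  -- basic building blocks at 0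
  have hx2 : HasDerivAt (fun x : ℝ => x^2) (2 * 0 ^ 1) 0 := by
    simpa using hasDerivAt_pow 2 (0:ℝ)
  have hA := (((hx2.const_mul 2).add_const (2*s^2)).add_const 1)
  have hB := (((hx2.const_mul 2).add_const (2*s^2)).sub_const 1)
  have hC := ((((hx2.add_const (s^2)).pow 2).add hx2).sub_const (s^2)).sub_const c
  -- basic building blocks at s
  have hy2 : HasDerivAt (fun y : ℝ => y^2) (2 * s ^ 1) s := by
    simpa using hasDerivAt_pow 2 s
  have hA2 := (((hy2.const_mul 2).const_add (2*0^2)).add_const 1)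
  have hB2 := (((hy2.const_mul 2).const_add (2*0^2)).sub_const 1)
  have hC2 := ((((hy2.const_add (0^2)).pow 2).add_const (0^2)).sub hy2).sub_const c
  -- the four partial derivatives
  have e1 : deriv (fun x : ℝ => P x s) 0 = -1/2 - 2*c := by
    have h := (((hasDerivAt_id (0:ℝ)).mul hA).mul hC).sub ((hB.const_mul s).mul hf0)
    have h2 : HasDerivAt (fun x : ℝ => P x s) (-1/2 - 2*c) 0 := by
      rw [show (fun x : ℝ => P x s) = fun x : ℝ =>
        x * (2*x^2 + 2*s^2 + 1) * ((x^2 + s^2)^2 + x^2 - s^2 - c)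
          - s * (2*x^2 + 2*s^2 - 1) * MvPolynomial.eval ![x, s] W from funext fun x => hP x s]
      refine h.congr_deriv (Eq.symm ?_)
      simp only [id_eq, Pi.mul_apply, Pi.add_apply, Pi.sub_apply, Pi.pow_apply, Nat.cast_ofNat]
      linear_combination (-2*s^4 + 1 + 2*c + 2*s*df) * hs2
    exact h2.deriv
  have e2 : deriv (fun y : ℝ => Q 0 y) s = -1/2 - 2*c := by
    have h := (((hasDerivAt_id s).mul hB2).mul hC2).add ((hA2.const_mul 0).mul hg0)
    have h2 : HasDerivAt (fun y : ℝ => Q 0 y) (-1/2 - 2*c) s := by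
      rw [show (fun y : ℝ => Q 0 y) = fun y : ℝ =>
        y * (2*0^2 + 2*y^2 - 1) * ((0^2 + y^2)^2 + 0^2 - y^2 - c)
          + 0 * (2*0^2 + 2*y^2 + 1) * MvPolynomial.eval ![0, y] W from funext fun y => hQ 0 y]
      refine h.congr_deriv (Eq.symm ?_)
      simp only [id_eq, Pi.mul_apply, Pi.add_apply, Pi.sub_apply, Pi.pow_apply, Nat.cast_ofNat]
      linear_combination (-14*s^4 + 8*s^2 + 6*c + 1) * hs2
    exact h2.deriv
  have e3 : deriv (fun y : ℝ => P 0 y) s = -2 * w0 := by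
    have h := ((hA2.const_mul 0).mul hC2).sub (((hasDerivAt_id s).mul hB2).mul hg0)
    have h2 : HasDerivAt (fun y : ℝ => P 0 y) (-2 * w0) s := by
      rw [show (fun y : ℝ => P 0 y) = fun y : ℝ =>
        0 * (2*0^2 + 2*y^2 + 1) * ((0^2 + y^2)^2 + 0^2 - y^2 - c)
          - y * (2*0^2 + 2*y^2 - 1) * MvPolynomial.eval ![0, y] W from funext fun y => hP 0 y]
      refine h.congr_deriv (Eq.symm ?_)
      simp only [id_eq, Pi.mul_apply, Pi.add_apply, Pi.sub_apply, Pi.pow_apply, Nat.cast_ofNat]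
      linear_combination (6*w0 + 2*s*dg) * hs2
    exact h2.deriv
  have e4 : deriv (fun x : ℝ => Q x s) 0 = 2 * w0 := by
    have h := ((hB.const_mul s).mul hC).add (((hasDerivAt_id (0:ℝ)).mul hA).mul hf0)
    have h2 : HasDerivAt (fun x : ℝ => Q x s) (2 * w0) 0 := by
      rw [show (fun x : ℝ => Q x s) = fun x : ℝ =>
        s * (2*x^2 + 2*s^2 - 1) * ((x^2 + s^2)^2 + x^2 - s^2 - c)
          + x * (2*x^2 + 2*s^2 + 1) * MvPolynomial.eval ![x, s] W from funext fun x => hQ x s]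
      refine h.congr_deriv (Eq.symm ?_)
      simp only [id_eq, Pi.mul_apply, Pi.add_apply, Pi.sub_apply, Pi.pow_apply, Nat.cast_ofNat]
      linear_combination (-2*w0) * hs2
    exact h2.deriv
  rw [e1, e2] at hτ
  rw [e1, e2, e3, e4] at hΔ
  refine ⟨by rw [hτ]; ring, ?_, ?_, ?_, ?_⟩
  · rw [hτ, hΔ]; ring
  · rw [hτ, hΔ]; nlinarith [sq_nonneg w0]
  · intro hc; rw [hτ]; linarith
  · intro hc; rw [hτ]; linarith
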